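/- Let q = 2 and A = F_2[t]. With S_1(k) = 1/t^k + 1/(t+1)^k and Δ(a,b) = S_1(a)S_1(b) - S_1(a+b), one has for all b ∈ Z_+: Δ(3, b+4) - Δ(3, b) = S_1(b+4) + S_1(b+3). -/
import Mathlib

lemma aux_stmt16 {K : Type*} [Field K] (x y : K) (hx : x ≠ 0) (hy : y ≠ 0)
    (hxy : y = x + 1) (h2 : (2:K) = 0) (b : ℕ) :
    ((x^3)⁻¹ + (y^3)⁻¹) * ((x^(b+4))⁻¹ + (y^(b+4))⁻¹) - ((x^(b+7))⁻¹ + (y^(b+7))⁻¹)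
    - (((x^3)⁻¹ + (y^3)⁻¹) * ((x^b)⁻¹ + (y^b)⁻¹) - ((x^(b+3))⁻¹ + (y^(b+3))⁻¹))
    = ((x^(b+4))⁻¹ + (y^(b+4))⁻¹) + ((x^(b+3))⁻¹ + (y^(b+3))⁻¹) := by
  have hg : x⁻¹ = y⁻¹ + x⁻¹ * y⁻¹ := by
    field_simp
    exact hxy
  simp only [← inv_pow, pow_add]
  set u : K := x⁻¹
  set v : K := y⁻¹
  set U : K := u ^ b
  set V : K := v ^ b
  linear_combination ((-1)*u^3*v^2*U + (-1)*u^3*v*U + (-1)*u^3*U + (-1)*u^2*v^3*V + (1)*u^2*v^2*U + (-1)*u^2*v^2*V + (2)*u^2*v*U + (-1)*u^2*v*V + (3)*u^2*U + (-1)*u^2*V + (1)*u*v^3*V + (-1)*u*v^2*U + (2)*u*v^2*V + (-3)*u*v*U + (3)*u*v*V + (-6)*u*U + (4)*u*V + (-1)*v^3*V + (1)*v^2*U + (-3)*v^2*V + (4)*v*U + (-6)*v*V + (10)*U + (-10)*V) * hg + ((-1)*v^4*V + (-2)*u^3*U + (-2)*v^3*V + (3)*u^2*U + (-2)*u^2*V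 + (2)*v^2*U + (-3)*v^2*V + (-5)*u*U + (5)*v*U + (5)*u*V + (-5)*v*V) * h2

/-- For `q = 2`, `S_1(k) = 1/t^k + 1/(t+1)^k` and
`Δ(a,b) = S_1(a)S_1(b) - S_1(a+b)`, one has
`Δ(3, b+4) - Δ(3, b) = S_1(b+4) + S_1(b+3)` for all `b ≥ 1`. -/
theorem stmt_16
    (S1 : ℕ → RatFunc (ZMod 2))
    (hS1 : ∀ k, S1 k = (RatFunc.X ^ k)⁻¹ + ((RatFunc.X + 1) ^ k)⁻¹)
    (Δ : ℕ → ℕ → RatFunc (ZMod 2))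
    (hΔ : ∀ a b, Δ a b = S1 a * S1 b - S1 (a + b))
    (b : ℕ) (hb : 1 ≤ b) :
    Δ 3 (b + 4) - Δ 3 b = S1 (b + 4) + S1 (b + 3) := by
  have hx : (RatFunc.X : RatFunc (ZMod 2)) ≠ 0 := RatFunc.X_ne_zero
  have hy : (RatFunc.X + 1 : RatFunc (ZMod 2)) ≠ 0 := by
    have h : (RatFunc.X + 1 : RatFunc (ZMod 2))
        = algebraMap (Polynomial (ZMod 2)) _ (Polynomial.X + 1) := by
      simp [RatFunc.algebraMap_X]
    rw [h]
    exact RatFunc.algebraMap_ne_zero (by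
      intro h0; simpa using congrArg (Polynomial.eval 0) h0)
  have h2 : (2 : RatFunc (ZMod 2)) = 0 := by
    haveI : CharP (RatFunc (ZMod 2)) 2 :=
      charP_of_injective_algebraMap (algebraMap (ZMod 2) (RatFunc (ZMod 2))).injective 2
    exact CharP.cast_eq_zero _ 2
  simp only [hΔ, hS1]
  rw [show 3 + (b + 4) = b + 7 by omega, show 3 + b = b + 3 by omega]
  exact aux_stmt16 RatFunc.X (RatFunc.X + 1) hx hy rfl h2 b
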